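/- Let N be an even natural number. The following map is a bijection from 'Z¹_N onto BP^{N/2}_{0,2}: each string 2a, …, 2a of ν (necessarily of even length) is replaced by a−1, a+1, …, a−1, a+1 of the same length if the string has even origin, and by a, a, …, a of the same length if it has odd origin; each string 2a+1, …, 2a+1 is replaced by a, a+1, a, a+1, … of the same length if it has even origin, and by a+1, a, a+1, a, … of the same length if it has odd origin. -/

import Mathlib

/-- A sequence of naturals that is eventually zero. -/
def EventuallyZero (l : ℕ → ℕ) : Prop := ∃ N, ∀ m, N ≤ m → l m = 0

/-- A bipartition: eventually zero, with `λ₁ ≥ λ₃ ≥ …` and `λ₂ ≥ λ₄ ≥ …`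
(0-indexed: `l i = λ_{i+1}`). -/
def IsBipartition (l : ℕ → ℕ) : Prop :=
  EventuallyZero l ∧ ∀ i, l (i + 2) ≤ l i

/-- A partition: eventually zero and weakly decreasing. -/
def IsPartitionSeq (l : ℕ → ℕ) : Prop :=
  EventuallyZero l ∧ ∀ i, l (i + 1) ≤ l i

/-- `λ` has excess `(e, e')`: `λᵢ + e ≥ λᵢ₊₁` for odd (paper) `i`,
`λᵢ + e' ≥ λᵢ₊₁` for even (paper) `i`.  With 0-based indices, paper-odd
positions are the even Lean indices. -/
def HasExcess (e e' : ℕ) (l : ℕ → ℕ) : Prop :=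
  ∀ i, (Even i → l (i + 1) ≤ l i + e) ∧ (Odd i → l (i + 1) ≤ l i + e')

/-- The (finite) sum of an eventually zero sequence is `n`. -/
def SumsTo (l : ℕ → ℕ) (n : ℕ) : Prop :=
  ∃ N, (∀ m, N ≤ m → l m = 0) ∧ ∑ i ∈ Finset.range N, l i = n

/-- Starting index of the maximal run (string) of entries equal to `ν i`. -/
noncomputable def strStart (ν : ℕ → ℕ) (i : ℕ) : ℕ := sInf {j | ν j = ν i}

/-- Length of the string of entries equal to `ν i`. -/
noncomputable def strLen (ν : ℕ → ℕ) (i : ℕ) : ℕ := {j | ν j = ν i}.ncard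

/-- Every odd part occurs an even number of times. -/
def OddPartsEvenMult (ν : ℕ → ℕ) : Prop := ∀ c, Odd c → Even ({i | ν i = c}.ncard)

/-- Every even positive part occurs an even number of times. -/
def EvenPartsEvenMult (ν : ℕ → ℕ) : Prop :=
  ∀ c, 0 < c → Even c → Even ({i | ν i = c}.ncard)


/-- The substitution of 3.6(b).  A string has even origin iff its 1-based starting
index is even, i.e. its 0-based start strStart is odd. -/
noncomputable def T5 (ν : ℕ → ℕ) : ℕ → ℕ := fun i =>
  if ν i = 0 then 0
  else if ν i % 2 = 0 then
    (if strStart ν i % 2 = 1 then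
      (if (i - strStart ν i) % 2 = 0 then ν i / 2 - 1 else ν i / 2 + 1)
     else ν i / 2)
  else
    (if strStart ν i % 2 = 1 then
      (if (i - strStart ν i) % 2 = 0 then ν i / 2 else ν i / 2 + 1)
     else
      (if (i - strStart ν i) % 2 = 0 then ν i / 2 + 1 else ν i / 2))




/-- number of odd parts among indices `< i`. -/
def Ocnt (ν : ℕ → ℕ) (i : ℕ) : ℕ := ((Finset.range i).filter (fun j => ν j % 2 = 1)).card

lemma Ocnt_zero (ν : ℕ → ℕ) : Ocnt ν 0 = 0 := by simp [Ocnt]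

lemma Ocnt_succ (ν : ℕ → ℕ) (i : ℕ) : Ocnt ν (i+1) = Ocnt ν i + ν i % 2 := by
  unfold Ocnt
  rw [Finset.range_add_one, Finset.filter_insert]
  rcases Nat.mod_two_eq_zero_or_one (ν i) with h | h <;>
    simp [h, Finset.card_insert_of_notMem]

section

variable {ν : ℕ → ℕ}

lemma nu_anti (hdec : ∀ i, ν (i+1) ≤ ν i) : ∀ {i j : ℕ}, i ≤ j → ν j ≤ ν i := by
  intro i j h
  exact antitone_nat_of_succ_le hdec h

lemma Ocnt_stable (hdec : ∀ i, ν (i+1) ≤ ν i) {i : ℕ} (h0 : ν i = 0) :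
    ∀ K, i ≤ K → Ocnt ν K = Ocnt ν i := by
  intro K hK
  induction K, hK using Nat.le_induction with
  | base => rfl
  | succ K hK ih =>
      have : ν K = 0 := Nat.le_antisymm (h0 ▸ nu_anti hdec hK) (Nat.zero_le _)
      rw [Ocnt_succ, this, ih]; ring

lemma sum_mod_Ocnt (ν : ℕ → ℕ) (K : ℕ) :
    (∑ j ∈ Finset.range K, ν j) % 2 = Ocnt ν K % 2 := by
  induction K with
  | zero => simp [Ocnt]
  | succ K ih =>
      rw [Finset.sum_range_succ, Ocnt_succ]
      omega

lemma sum_ext {B K : ℕ} (h0 : ∀ m, B ≤ m → ν m = 0) (hK : B ≤ K) :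
    ∑ j ∈ Finset.range K, ν j = ∑ j ∈ Finset.range B, ν j := by
  rw [← Finset.sum_subset (Finset.range_subset_range.2 hK)]
  intro x hx hnx
  exact h0 x (by simp at hnx; omega)

lemma strStart_le (ν : ℕ → ℕ) (i : ℕ) : strStart ν i ≤ i :=
  Nat.sInf_le rfl

lemma strStart_spec (ν : ℕ → ℕ) (i : ℕ) : ν (strStart ν i) = ν i :=
  Nat.sInf_mem (⟨i, rfl⟩ : ({j | ν j = ν i} : Set ℕ).Nonempty)

lemma lt_strStart {i j : ℕ} (h : j < strStart ν i) : ν j ≠ ν i :=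
  Nat.notMem_of_lt_sInf (s := {j | ν j = ν i}) h

/-- run values: everything between `strStart ν i` and `i` equals `ν i`. -/
lemma run_const (hdec : ∀ i, ν (i+1) ≤ ν i) {i j : ℕ}
    (h1 : strStart ν i ≤ j) (h2 : j ≤ i) : ν j = ν i :=
  le_antisymm (strStart_spec ν i ▸ nu_anti hdec h1) (nu_anti hdec h2)

lemma Ocnt_run (hdec : ∀ i, ν (i+1) ≤ ν i) (i : ℕ) :
    Ocnt ν i = Ocnt ν (strStart ν i) + (i - strStart ν i) * (ν i % 2) := by
  set s := strStart ν i with hs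
  have hsle : s ≤ i := strStart_le ν i
  clear_value s
  induction i with
  | zero => simp_all
  | succ i ih =>
      rcases Nat.lt_or_ge s (i+1) with h | h
      · have hsi : s ≤ i := by omega
        have hrun : ν i = ν (i+1) := run_const hdec (hs ▸ hsi) (Nat.le_succ i)
        have := ih ?_ hsi
        · rw [Ocnt_succ, this, hrun]
          have : i + 1 - s = (i - s) + 1 := by omega
          rw [this]; ring
        · -- strStart ν i = s : same set since ν i = ν (i+1)
          rw [hs]; unfold strStart; rw [hrun]
      · have : s = i + 1 := le_antisymm hsle h
        simp [this]

end

section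
variable {ν : ℕ → ℕ}

/-- At a "run start" (every earlier part is strictly bigger), the number of even
parts before is even. -/
lemma E_even (hdec : ∀ i, ν (i+1) ≤ ν i) (hmult : EvenPartsEvenMult ν) :
    ∀ k, (∀ j, j < k → ν k < ν j) →
      Even (((Finset.range k).filter (fun j => ν j % 2 = 0)).card) := by
  intro k
  induction k using Nat.strong_induction_on with
  | _ k ih =>
    intro hk
    match k, hk with
    | 0, _ => simp
    | (m+1), hk =>
      set c := ν m with hc
      have hcpos : ν (m+1) < c := hk m (Nat.lt_succ_self m)
      set s := strStart ν m with hs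
      have hsle : s ≤ m := strStart_le ν m
      have hνs : ν s = c := strStart_spec ν m
      have hstart : ∀ j, j < s → ν s < ν j := by
        intro j hj
        have h1 : ν s ≤ ν j := nu_anti hdec (le_of_lt hj)
        have h2 : ν j ≠ ν m := lt_strStart hj
        omega
      have hIH := ih s (by omega) (by rw [hνs] at hstart ⊢; exact fun j hj => hνs ▸ hstart j hj)
      -- split range (m+1) into range s and Ico s (m+1)
      have hsplit : Finset.range (m+1) = Finset.range s ∪ Finset.Ico s (m+1) := by
        simp only [Finset.range_eq_Ico]
        exact (Finset.Ico_union_Ico_eq_Ico (Nat.zero_le s) (by omega)).symm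
      rw [hsplit, Finset.filter_union, Finset.card_union_of_disjoint]
      · have hrunval : ∀ j ∈ Finset.Ico s (m+1), ν j = c := by
          intro j hj
          simp only [Finset.mem_Ico] at hj
          exact run_const hdec hj.1 (by omega)
        rcases Nat.mod_two_eq_zero_or_one c with hc2 | hc2
        · -- c even: the filtered Ico is the whole Ico, whose length is even by hmult
          have : (Finset.Ico s (m+1)).filter (fun j => ν j % 2 = 0) = Finset.Ico s (m+1) := by
            apply Finset.filter_true_of_mem
            intro j hj; rw [hrunval j hj]; exact hc2
          rw [this]
          have hset : {i | ν i = c} = ↑(Finset.Ico s (m+1)) := by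
            ext j
            simp only [Set.mem_setOf_eq, Finset.coe_Ico, Set.mem_Ico]
            constructor
            · intro hj
              constructor
              · by_contra h
                exact absurd hj (lt_strStart (by omega))
              · by_contra h
                have : ν j ≤ ν (m+1) := nu_anti hdec (by omega)
                omega
            · intro hj; exact hrunval j (Finset.mem_Ico.2 hj)
          have hmc := hmult c (by omega) (Nat.even_iff.2 hc2)
          rw [hset, Set.ncard_coe_finset, Nat.card_Ico] at hmc
          rw [Nat.card_Ico]
          exact hIH.add hmc
        · -- c odd: the filtered Ico is empty
          have : (Finset.Ico s (m+1)).filter (fun j => ν j % 2 = 0) = ∅ := by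
            apply Finset.filter_false_of_mem
            intro j hj; rw [hrunval j hj]; omega
          rw [this]
          simpa using hIH
      · exact Finset.disjoint_filter_filter (by
          rw [Finset.range_eq_Ico]
          exact Finset.Ico_disjoint_Ico_consecutive 0 s (m+1))

/-- index = odd count + even count below it. -/
lemma idx_split (ν : ℕ → ℕ) (k : ℕ) :
    k = Ocnt ν k + ((Finset.range k).filter (fun j => ν j % 2 = 0)).card := by
  induction k with
  | zero => simp [Ocnt]
  | succ k ih =>
      rw [Ocnt_succ, Finset.range_add_one, Finset.filter_insert]
      rcases Nat.mod_two_eq_zero_or_one (ν k) with h | h <;>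
        simp [h, Finset.card_insert_of_notMem] <;> omega

/-- L1: for a positive part, parity of the run start = parity of `Ocnt` there
(plus the run-length contribution). -/
lemma strStart_parity (hdec : ∀ i, ν (i+1) ≤ ν i) (hmult : EvenPartsEvenMult ν)
    {i : ℕ} (hpos : 0 < ν i) :
    strStart ν i % 2 = Ocnt ν (strStart ν i) % 2 := by
  set s := strStart ν i with hs
  have hνs : ν s = ν i := strStart_spec ν i
  have hstart : ∀ j, j < s → ν s < ν j := by
    intro j hj
    have h1 : ν s ≤ ν j := nu_anti hdec (le_of_lt hj)
    have h2 : ν j ≠ ν i := lt_strStart hj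
    omega
  have hE := E_even hdec hmult s (by rw [hνs] at hstart ⊢; exact hstart)
  have hsplit := idx_split ν s
  obtain ⟨t, ht⟩ := hE
  omega

/-- L1 proper. -/
lemma L1 (hdec : ∀ i, ν (i+1) ≤ ν i) (hmult : EvenPartsEvenMult ν)
    {i : ℕ} (he : ν i % 2 = 0) (hpos : 0 < ν i) :
    strStart ν i % 2 = Ocnt ν i % 2 := by
  have h1 := strStart_parity hdec hmult hpos
  have h2 := Ocnt_run hdec i
  have h3 := strStart_le ν i
  rw [he, Nat.mul_zero] at h2
  omega

/-- F1: an odd part sits at an index of the same parity as the count of odd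
parts before it. -/
lemma F1 (hdec : ∀ i, ν (i+1) ≤ ν i) (hmult : EvenPartsEvenMult ν)
    {i : ℕ} (ho : ν i % 2 = 1) : i % 2 = Ocnt ν i % 2 := by
  have hpos : 0 < ν i := by omega
  have h1 := strStart_parity hdec hmult hpos
  have h2 := Ocnt_run hdec i
  have h3 := strStart_le ν i
  rw [ho, Nat.mul_one] at h2
  omega

/-- F2: beyond the support, the count of odd parts is even (N even). -/
lemma F2 (hdec : ∀ i, ν (i+1) ≤ ν i) {B N : ℕ} (hB : ∀ m, B ≤ m → ν m = 0)
    (hsum : ∑ j ∈ Finset.range B, ν j = N) (hN : Even N)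
    {i : ℕ} (h0 : ν i = 0) : Ocnt ν i % 2 = 0 := by
  have h1 : Ocnt ν (max i B) = Ocnt ν i := Ocnt_stable hdec h0 _ (le_max_left _ _)
  have h2 := sum_mod_Ocnt ν (max i B)
  have h3 : ∑ j ∈ Finset.range (max i B), ν j = ∑ j ∈ Finset.range B, ν j :=
    sum_ext hB (le_max_right _ _)
  obtain ⟨n, hn⟩ := hN
  omega

/-- L4': an even positive part whose index has the parity of its odd-count is
not the last of its run. -/
lemma L4 (hdec : ∀ i, ν (i+1) ≤ ν i) (hmult : EvenPartsEvenMult ν)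
    {i : ℕ} (he : ν i % 2 = 0) (hpos : 0 < ν i)
    (hσ : i % 2 = Ocnt ν i % 2) : ν (i+1) = ν i := by
  by_contra hne
  have hlt : ν (i+1) < ν i := lt_of_le_of_ne (hdec i) hne
  set s := strStart ν i with hs
  have hνs : ν s = ν i := strStart_spec ν i
  have hsle : s ≤ i := strStart_le ν i
  have hset : {j | ν j = ν i} = ↑(Finset.Ico s (i+1)) := by
    ext j
    simp only [Set.mem_setOf_eq, Finset.coe_Ico, Set.mem_Ico]
    constructor
    · intro hj
      constructor
      · by_contra h; exact absurd hj (lt_strStart (by omega))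
      · by_contra h
        have : ν j ≤ ν (i+1) := nu_anti hdec (by omega)
        omega
    · intro hj; exact run_const hdec hj.1 (by omega)
  have hmc := hmult (ν i) hpos (Nat.even_iff.2 he)
  rw [hset, Set.ncard_coe_finset, Nat.card_Ico] at hmc
  have hL1 := L1 hdec hmult he hpos
  obtain ⟨t, ht⟩ := hmc
  omega

end

/-- σ-based reformulation of `T5`. -/
noncomputable def T5' (ν : ℕ → ℕ) : ℕ → ℕ := fun i =>
  if ν i = 0 then 0
  else if ν i % 2 = 1 then (if i % 2 = 0 then ν i / 2 + 1 else ν i / 2)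
  else (if Ocnt ν i % 2 = 0 then ν i / 2
        else if i % 2 = 0 then ν i / 2 + 1 else ν i / 2 - 1)

section
variable {ν : ℕ → ℕ}

set_option maxHeartbeats 2000000 in
lemma T5_eq_T5' (hdec : ∀ i, ν (i+1) ≤ ν i) (hmult : EvenPartsEvenMult ν) (i : ℕ) :
    T5 ν i = T5' ν i := by
  have hsle : strStart ν i ≤ i := strStart_le ν i
  have hL1 : ν i % 2 = 0 → 0 < ν i → strStart ν i % 2 = Ocnt ν i % 2 :=
    fun h hp => L1 hdec hmult h hp
  simp only [T5, T5']
  split_ifs <;> omega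

set_option maxHeartbeats 2000000 in
lemma T5'_cases (hdec : ∀ i, ν (i+1) ≤ ν i) (hmult : EvenPartsEvenMult ν) (i : ℕ) :
    (ν i = 0 ∧ T5' ν i = 0) ∨
    (ν i % 2 = 1 ∧ i % 2 = 0 ∧ Ocnt ν i % 2 = 0 ∧ 2 * T5' ν i = ν i + 1) ∨
    (ν i % 2 = 1 ∧ i % 2 = 1 ∧ Ocnt ν i % 2 = 1 ∧ 2 * T5' ν i + 1 = ν i) ∨
    (ν i % 2 = 0 ∧ 0 < ν i ∧ Ocnt ν i % 2 = 0 ∧ 2 * T5' ν i = ν i) ∨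
    (ν i % 2 = 0 ∧ 0 < ν i ∧ Ocnt ν i % 2 = 1 ∧ i % 2 = 0 ∧ 2 * T5' ν i = ν i + 2) ∨
    (ν i % 2 = 0 ∧ 0 < ν i ∧ Ocnt ν i % 2 = 1 ∧ i % 2 = 1 ∧ 2 * T5' ν i + 2 = ν i) := by
  have hF1 : ν i % 2 = 1 → i % 2 = Ocnt ν i % 2 := fun h => F1 hdec hmult h
  simp only [T5']
  split_ifs <;> omega

lemma T5'_zero {i : ℕ} (h : ν i = 0) : T5' ν i = 0 := by simp [T5', h]

end


/-- state bit read off from a bipartition: `1` iff the excess-2 bound is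
saturated entering pair `j`. -/
def stN (l : ℕ → ℕ) : ℕ → ℕ
  | 0 => 0
  | (j+1) => if l (2*j+2) = l (2*j+1) + 2 then 1 else 0

/-- the inverse substitution. -/
def Sinv (l : ℕ → ℕ) : ℕ → ℕ := fun i =>
  if i % 2 = 0 then
    (if stN l (i/2) = 1 then 2 * l i - 2
     else if stN l (i/2+1) = 1 then 2 * l i - 1
     else if l i = l (i+1) then 2 * l i
     else 2 * l i - 1)
  else
    (if stN l (i/2+1) = 1 then 2 * l i + 2
     else if stN l (i/2) = 1 then 2 * l i + 1
     else if l (i-1) = l i then 2 * l i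
     else 2 * l i + 1)

lemma stN_zero (l : ℕ → ℕ) : stN l 0 = 0 := rfl

lemma stN_succ (l : ℕ → ℕ) (j : ℕ) :
    stN l (j+1) = if l (2*j+2) = l (2*j+1) + 2 then 1 else 0 := rfl

lemma stN_le (l : ℕ → ℕ) : ∀ j, stN l j ≤ 1
  | 0 => by rw [stN_zero]; omega
  | (j+1) => by rw [stN_succ]; split_ifs <;> omega

lemma stN_iff (l : ℕ → ℕ) (j : ℕ) :
    stN l (j+1) = 1 ↔ l (2*j+2) = l (2*j+1) + 2 := by
  rw [stN_succ]; split_ifs with h <;> simp [h]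

lemma Sinv_even (l : ℕ → ℕ) (j : ℕ) : Sinv l (2*j) =
    (if stN l j = 1 then 2 * l (2*j) - 2
     else if stN l (j+1) = 1 then 2 * l (2*j) - 1
     else if l (2*j) = l (2*j+1) then 2 * l (2*j)
     else 2 * l (2*j) - 1) := by
  unfold Sinv
  rw [if_pos (show (2*j) % 2 = 0 from by omega), show (2*j)/2 = j from by omega]

lemma Sinv_odd (l : ℕ → ℕ) (j : ℕ) : Sinv l (2*j+1) =
    (if stN l (j+1) = 1 then 2 * l (2*j+1) + 2
     else if stN l j = 1 then 2 * l (2*j+1) + 1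
     else if l (2*j) = l (2*j+1) then 2 * l (2*j+1)
     else 2 * l (2*j+1) + 1) := by
  unfold Sinv
  rw [if_neg (show ¬ (2*j+1) % 2 = 0 from by omega),
    show (2*j+1)/2 = j from by omega, show (2*j+1)-1 = 2*j from by omega]

section
variable {ν : ℕ → ℕ} {B N : ℕ}

set_option maxHeartbeats 2000000 in
/-- Full classification of a pair `(2j, 2j+1)` under the forward map. -/
lemma pair_cases (hdec : ∀ i, ν (i+1) ≤ ν i) (hmult : EvenPartsEvenMult ν)
    (hB : ∀ m, B ≤ m → ν m = 0) (hsum : ∑ j ∈ Finset.range B, ν j = N) (hN : Even N)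
    (j : ℕ) :
    -- OO
    (ν (2*j) % 2 = 1 ∧ ν (2*j+1) % 2 = 1 ∧ Ocnt ν (2*j) % 2 = 0 ∧ Ocnt ν (2*j+2) % 2 = 0 ∧
      2 * T5' ν (2*j) = ν (2*j) + 1 ∧ 2 * T5' ν (2*j+1) + 1 = ν (2*j+1) ∧
      ν (2*j+1) ≤ ν (2*j)) ∨
    -- OE
    (ν (2*j) % 2 = 1 ∧ ν (2*j+1) % 2 = 0 ∧ 0 < ν (2*j+1) ∧ Ocnt ν (2*j) % 2 = 0 ∧
      Ocnt ν (2*j+2) % 2 = 1 ∧ 2 * T5' ν (2*j) = ν (2*j) + 1 ∧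
      2 * T5' ν (2*j+1) + 2 = ν (2*j+1) ∧ ν (2*j+2) = ν (2*j+1) ∧ ν (2*j+1) ≤ ν (2*j)) ∨
    -- EE0  (both even, equal, state 0)
    (ν (2*j) % 2 = 0 ∧ Ocnt ν (2*j) % 2 = 0 ∧ Ocnt ν (2*j+2) % 2 = 0 ∧
      ν (2*j+1) = ν (2*j) ∧ 2 * T5' ν (2*j) = ν (2*j) ∧ 2 * T5' ν (2*j+1) = ν (2*j)) ∨
    -- EE1
    (ν (2*j) % 2 = 0 ∧ 0 < ν (2*j) ∧ ν (2*j+1) % 2 = 0 ∧ 0 < ν (2*j+1) ∧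
      Ocnt ν (2*j) % 2 = 1 ∧ Ocnt ν (2*j+2) % 2 = 1 ∧
      2 * T5' ν (2*j) = ν (2*j) + 2 ∧ 2 * T5' ν (2*j+1) + 2 = ν (2*j+1) ∧
      ν (2*j+2) = ν (2*j+1) ∧ ν (2*j+1) ≤ ν (2*j)) ∨
    -- EO
    (ν (2*j) % 2 = 0 ∧ 0 < ν (2*j) ∧ ν (2*j+1) % 2 = 1 ∧
      Ocnt ν (2*j) % 2 = 1 ∧ Ocnt ν (2*j+2) % 2 = 0 ∧
      2 * T5' ν (2*j) = ν (2*j) + 2 ∧ 2 * T5' ν (2*j+1) + 1 = ν (2*j+1) ∧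
      ν (2*j+1) ≤ ν (2*j)) := by
  have c0 := T5'_cases hdec hmult (2*j)
  have c1 := T5'_cases hdec hmult (2*j+1)
  have o1 : Ocnt ν (2*j+1) = Ocnt ν (2*j) + ν (2*j) % 2 := Ocnt_succ ν (2*j)
  have o2 : Ocnt ν (2*j+2) = Ocnt ν (2*j+1) + ν (2*j+1) % 2 := Ocnt_succ ν (2*j+1)
  have d1 : ν (2*j+1) ≤ ν (2*j) := hdec (2*j)
  have f2 : ν (2*j+1) = 0 → Ocnt ν (2*j+1) % 2 = 0 := fun h => F2 hdec hB hsum hN h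
  have hL40 : ν (2*j) % 2 = 0 → 0 < ν (2*j) →
      (2*j) % 2 = Ocnt ν (2*j) % 2 → ν (2*j+1) = ν (2*j) :=
    fun h hp hs => L4 hdec hmult h hp hs
  have hL41 : ν (2*j+1) % 2 = 0 → 0 < ν (2*j+1) →
      (2*j+1) % 2 = Ocnt ν (2*j+1) % 2 → ν (2*j+2) = ν (2*j+1) :=
    fun h hp hs => L4 hdec hmult h hp hs
  have f0 : ν (2*j) = 0 → Ocnt ν (2*j) % 2 = 0 := fun h => F2 hdec hB hsum hN h
  rcases c0 with h0 | h0 | h0 | h0 | h0 | h0 <;>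
    rcases c1 with h1 | h1 | h1 | h1 | h1 | h1 <;>
      first
        | (exfalso; omega)
        | (refine Or.inl ?_; omega)
        | (refine Or.inr (Or.inl ?_); omega)
        | (refine Or.inr (Or.inr (Or.inl ?_)); omega)
        | (refine Or.inr (Or.inr (Or.inr (Or.inl ?_))); omega)
        | (refine Or.inr (Or.inr (Or.inr (Or.inr ?_))); omega)

end

set_option maxHeartbeats 2000000 in
lemma stN_T5' (hdec : ∀ i, ν (i+1) ≤ ν i) (hmult : EvenPartsEvenMult ν)
    (hB : ∀ m, B ≤ m → ν m = 0) (hsum : ∑ j ∈ Finset.range B, ν j = N) (hN : Even N)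
    (j : ℕ) : stN (T5' ν) j = Ocnt ν (2*j) % 2 := by
  cases j with
  | zero => rw [stN_zero, show 2*0 = 0 from rfl, Ocnt_zero]
  | succ k =>
      rw [stN_succ, show 2*(k+1) = 2*k+2 from by ring]
      have pc := pair_cases hdec hmult hB hsum hN k
      have pc' := pair_cases hdec hmult hB hsum hN (k+1)
      rw [show 2*(k+1) = 2*k+2 from by ring, show 2*k+2+1 = 2*k+3 from rfl,
        show 2*k+2+2 = 2*k+4 from rfl] at pc'
      have dlink : ν (2*k+2) ≤ ν (2*k+1) := hdec (2*k+1)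
      split_ifs with h <;> rcases pc with hp|hp|hp|hp|hp <;>
        rcases pc' with hq|hq|hq|hq|hq <;> omega

set_option maxHeartbeats 2000000 in
lemma C_left (hdec : ∀ i, ν (i+1) ≤ ν i) (hmult : EvenPartsEvenMult ν)
    (hB : ∀ m, B ≤ m → ν m = 0) (hsum : ∑ j ∈ Finset.range B, ν j = N) (hN : Even N)
    (i : ℕ) : Sinv (T5' ν) i = ν i := by
  rcases Nat.even_or_odd i with ⟨j, hj⟩ | ⟨j, hj⟩
  · have hij : i = 2*j := by omega
    subst hij
    rw [Sinv_even]
    have s0 := stN_T5' hdec hmult hB hsum hN j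
    have s1 := stN_T5' hdec hmult hB hsum hN (j+1)
    rw [show 2*(j+1) = 2*j+2 from by ring] at s1
    have pc := pair_cases hdec hmult hB hsum hN j
    split_ifs <;> rcases pc with hp|hp|hp|hp|hp <;> omega
  · have hij : i = 2*j+1 := by omega
    subst hij
    rw [Sinv_odd]
    have s0 := stN_T5' hdec hmult hB hsum hN j
    have s1 := stN_T5' hdec hmult hB hsum hN (j+1)
    rw [show 2*(j+1) = 2*j+2 from by ring] at s1
    have pc := pair_cases hdec hmult hB hsum hN j
    split_ifs <;> rcases pc with hp|hp|hp|hp|hp <;> omega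


section
variable {ν : ℕ → ℕ} {B N : ℕ}

lemma A_bip (hdec : ∀ i, ν (i+1) ≤ ν i) (hmult : EvenPartsEvenMult ν) (i : ℕ) :
    T5' ν (i+2) ≤ T5' ν i := by
  have c0 := T5'_cases hdec hmult i
  have c1 := T5'_cases hdec hmult (i+1)
  have c2 := T5'_cases hdec hmult (i+2)
  have o1 := Ocnt_succ ν i
  have o2 : Ocnt ν (i+2) = Ocnt ν (i+1) + ν (i+1) % 2 := Ocnt_succ ν (i+1)
  have d1 : ν (i+1) ≤ ν i := hdec i
  have d2 : ν (i+2) ≤ ν (i+1) := hdec (i+1)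
  have hsand : ν (i+2) = ν i → ν (i+1) = ν i := fun h =>
    le_antisymm (hdec i) (by omega)
  omega

lemma A_exc0 (hdec : ∀ i, ν (i+1) ≤ ν i) (hmult : EvenPartsEvenMult ν)
    (i : ℕ) (hi : i % 2 = 0) : T5' ν (i+1) ≤ T5' ν i := by
  have c0 := T5'_cases hdec hmult i
  have c1 := T5'_cases hdec hmult (i+1)
  have d1 : ν (i+1) ≤ ν i := hdec i
  omega

lemma A_exc2 (hdec : ∀ i, ν (i+1) ≤ ν i) (hmult : EvenPartsEvenMult ν)
    (i : ℕ) (hi : i % 2 = 1) : T5' ν (i+1) ≤ T5' ν i + 2 := by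
  have c0 := T5'_cases hdec hmult i
  have c1 := T5'_cases hdec hmult (i+1)
  have d1 : ν (i+1) ≤ ν i := hdec i
  omega

lemma pair_sum (hdec : ∀ i, ν (i+1) ≤ ν i) (hmult : EvenPartsEvenMult ν)
    (hB : ∀ m, B ≤ m → ν m = 0) (hsum : ∑ j ∈ Finset.range B, ν j = N) (hN : Even N)
    (j : ℕ) :
    2 * (T5' ν (2*j) + T5' ν (2*j+1)) + Ocnt ν (2*j+2) % 2
      = ν (2*j) + ν (2*j+1) + Ocnt ν (2*j) % 2 := by
  have c0 := T5'_cases hdec hmult (2*j)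
  have c1 := T5'_cases hdec hmult (2*j+1)
  have o1 := Ocnt_succ ν (2*j)
  have o2 : Ocnt ν (2*j+2) = Ocnt ν (2*j+1) + ν (2*j+1) % 2 := Ocnt_succ ν (2*j+1)
  have d1 : ν (2*j+1) ≤ ν (2*j) := hdec (2*j)
  have f2 : ν (2*j+1) = 0 → Ocnt ν (2*j+1) % 2 = 0 := fun h => F2 hdec hB hsum hN h
  omega

lemma sum_tele (hdec : ∀ i, ν (i+1) ≤ ν i) (hmult : EvenPartsEvenMult ν)
    (hB : ∀ m, B ≤ m → ν m = 0) (hsum : ∑ j ∈ Finset.range B, ν j = N) (hN : Even N) :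
    ∀ M, 2 * (∑ i ∈ Finset.range (2*M), T5' ν i) + Ocnt ν (2*M) % 2
      = ∑ i ∈ Finset.range (2*M), ν i := by
  intro M
  induction M with
  | zero => simp [Ocnt_zero]
  | succ M ih =>
      have hp := pair_sum hdec hmult hB hsum hN M
      have h22 : 2*(M+1) = 2*M+1+1 := by ring
      rw [h22, Finset.sum_range_succ, Finset.sum_range_succ,
        Finset.sum_range_succ, Finset.sum_range_succ]
      have h23 : 2*M+1+1 = 2*M+2 := rfl
      rw [h23]
      omega

lemma A_sum (hdec : ∀ i, ν (i+1) ≤ ν i) (hmult : EvenPartsEvenMult ν)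
    (hB : ∀ m, B ≤ m → ν m = 0) (hsum : ∑ j ∈ Finset.range B, ν j = N) (hN : Even N) :
    SumsTo (T5' ν) (N/2) := by
  refine ⟨2*B, fun m hm => T5'_zero (hB m (by omega)), ?_⟩
  have h1 := sum_tele hdec hmult hB hsum hN B
  have h2 : ∑ j ∈ Finset.range (2*B), ν j = N := by
    rw [sum_ext hB (by omega), hsum]
  have h3 : Ocnt ν (2*B) % 2 = 0 := F2 hdec hB hsum hN (hB (2*B) (by omega))
  obtain ⟨n, hn⟩ := hN
  omega

lemma A_mapsTo (hdec : ∀ i, ν (i+1) ≤ ν i) (hmult : EvenPartsEvenMult ν)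
    (hB : ∀ m, B ≤ m → ν m = 0) (hsum : ∑ j ∈ Finset.range B, ν j = N) (hN : Even N) :
    IsBipartition (T5' ν) ∧ SumsTo (T5' ν) (N/2) ∧ HasExcess 0 2 (T5' ν) := by
  refine ⟨⟨⟨B, fun m hm => T5'_zero (hB m hm)⟩, fun i => A_bip hdec hmult i⟩,
    A_sum hdec hmult hB hsum hN, fun i => ⟨fun he => ?_, fun ho => ?_⟩⟩
  · have := A_exc0 hdec hmult i (Nat.even_iff.1 he)
    omega
  · exact A_exc2 hdec hmult i (Nat.odd_iff.1 ho)

end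


section
variable {l : ℕ → ℕ} {B N : ℕ}

lemma B_st_strong (hbip : ∀ i, l (i+2) ≤ l i) (j : ℕ) :
    stN l j = 1 → l (2*j+1) + 2 ≤ l (2*j) ∧ 2 ≤ l (2*j) := by
  cases j with
  | zero => rw [stN_zero]; omega
  | succ k =>
      intro h
      rw [stN_iff] at h
      have hb : l (2*k+3) ≤ l (2*k+1) := hbip (2*k+1)
      rw [show 2*(k+1)+1 = 2*k+3 from by ring, show 2*(k+1) = 2*k+2 from by ring]
      omega

lemma B_st_next (hbip : ∀ i, l (i+2) ≤ l i) (j : ℕ) :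
    stN l (j+1) = 1 → l (2*j+1) + 2 ≤ l (2*j) := by
  intro h
  rw [stN_iff] at h
  have hb : l (2*j+2) ≤ l (2*j) := hbip (2*j)
  omega

lemma B_dec_pair (hbip : ∀ i, l (i+2) ≤ l i)
    (he0 : ∀ i, i % 2 = 0 → l (i+1) ≤ l i) (j : ℕ) :
    Sinv l (2*j+1) ≤ Sinv l (2*j) := by
  have h1 : l (2*j+1) ≤ l (2*j) := he0 (2*j) (by omega)
  have h2 := B_st_strong hbip j
  have h3 := B_st_next hbip j
  rw [Sinv_even, Sinv_odd]
  split_ifs <;> omega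

lemma B_dec_cross (hbip : ∀ i, l (i+2) ≤ l i)
    (he0 : ∀ i, i % 2 = 0 → l (i+1) ≤ l i)
    (he2 : ∀ i, i % 2 = 1 → l (i+1) ≤ l i + 2) (j : ℕ) :
    Sinv l (2*j+2) ≤ Sinv l (2*j+1) := by
  rw [show 2*j+2 = 2*(j+1) from by ring, Sinv_even, Sinv_odd,
    show 2*(j+1) = 2*j+2 from by ring, show 2*j+2+1 = 2*j+3 from rfl]
  have g1 : l (2*j+3) ≤ l (2*j+1) := hbip (2*j+1)
  have g2 : l (2*j+2) ≤ l (2*j) := hbip (2*j)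
  have g3 : l (2*j+2) ≤ l (2*j+1) + 2 := he2 (2*j+1) (by omega)
  have g4 : l (2*j+3) ≤ l (2*j+2) := he0 (2*j+2) (by omega)
  have s1 := stN_iff l j
  have s2 := stN_iff l (j+1)
  rw [show 2*(j+1)+2 = 2*j+4 from by ring, show 2*(j+1)+1 = 2*j+3 from by ring] at s2
  have h2 := B_st_strong hbip j
  split_ifs <;> omega

lemma B_dec (hbip : ∀ i, l (i+2) ≤ l i)
    (he0 : ∀ i, i % 2 = 0 → l (i+1) ≤ l i)
    (he2 : ∀ i, i % 2 = 1 → l (i+1) ≤ l i + 2) (i : ℕ) :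
    Sinv l (i+1) ≤ Sinv l i := by
  rcases Nat.even_or_odd i with ⟨j, hj⟩ | ⟨j, hj⟩
  · have : i = 2*j := by omega
    subst this
    exact B_dec_pair hbip he0 j
  · have : i = 2*j+1 := by omega
    subst this
    exact B_dec_cross hbip he0 he2 j

lemma B_st_vanish (hB : ∀ m, B ≤ m → l m = 0) {j : ℕ} (hj : B + 1 ≤ j) :
    stN l j = 0 := by
  obtain ⟨k, rfl⟩ : ∃ k, j = k+1 := ⟨j-1, by omega⟩
  rw [stN_succ, if_neg]
  rw [hB (2*k+2) (by omega), hB (2*k+1) (by omega)]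
  omega

lemma B_vanish (hB : ∀ m, B ≤ m → l m = 0) :
    ∀ m, 2*B+2 ≤ m → Sinv l m = 0 := by
  intro m hm
  rcases Nat.even_or_odd m with ⟨j, hj⟩ | ⟨j, hj⟩
  · have hmj : m = 2*j := by omega
    subst hmj
    rw [Sinv_even, B_st_vanish (j := j) hB (by omega), B_st_vanish (j := j+1) hB (by omega)]
    rw [hB (2*j) (by omega), hB (2*j+1) (by omega)]
    norm_num
  · have hmj : m = 2*j+1 := by omega
    subst hmj
    rw [Sinv_odd, B_st_vanish (j := j) hB (by omega), B_st_vanish (j := j+1) hB (by omega)]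
    rw [hB (2*j) (by omega), hB (2*j+1) (by omega)]
    norm_num

lemma B_pairsum (hbip : ∀ i, l (i+2) ≤ l i)
    (he0 : ∀ i, i % 2 = 0 → l (i+1) ≤ l i) (j : ℕ) :
    Sinv l (2*j) + Sinv l (2*j+1) + stN l j
      = 2*(l (2*j) + l (2*j+1)) + stN l (j+1) := by
  have h1 : l (2*j+1) ≤ l (2*j) := he0 (2*j) (by omega)
  have h2 := B_st_strong hbip j
  have h3 := B_st_next hbip j
  have h4 := stN_le l j
  have h5 := stN_le l (j+1)
  rw [Sinv_even, Sinv_odd]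
  split_ifs <;> omega

lemma B_sum_tele (hbip : ∀ i, l (i+2) ≤ l i)
    (he0 : ∀ i, i % 2 = 0 → l (i+1) ≤ l i) :
    ∀ M, (∑ i ∈ Finset.range (2*M), Sinv l i) + stN l 0
      = 2*(∑ i ∈ Finset.range (2*M), l i) + stN l M := by
  intro M
  induction M with
  | zero => simp
  | succ M ih =>
      have hp := B_pairsum hbip he0 M
      rw [show 2*(M+1) = 2*M+1+1 from by ring, Finset.sum_range_succ, Finset.sum_range_succ,
        Finset.sum_range_succ, Finset.sum_range_succ]
      omega

lemma B_sum (hbip : ∀ i, l (i+2) ≤ l i)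
    (he0 : ∀ i, i % 2 = 0 → l (i+1) ≤ l i)
    (hB : ∀ m, B ≤ m → l m = 0)
    (hsum : ∑ i ∈ Finset.range B, l i = N / 2) (hN : Even N) :
    ∑ i ∈ Finset.range (2*(B+1)), Sinv l i = N := by
  have h1 := B_sum_tele hbip he0 (B+1)
  have h2 : ∑ i ∈ Finset.range (2*(B+1)), l i = N / 2 := by
    rw [sum_ext hB (by omega), hsum]
  have h3 : stN l (B+1) = 0 := B_st_vanish hB (by omega)
  rw [stN_zero] at h1
  obtain ⟨n, hn⟩ := hN
  omega

end


section
variable {l : ℕ → ℕ} {B c : ℕ}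

lemma Pe (hbip : ∀ i, l (i+2) ≤ l i) (he0 : ∀ i, i % 2 = 0 → l (i+1) ≤ l i)
    {j : ℕ} (hc : Sinv l (2*j) = c) (hc2 : c % 2 = 0) (hcpos : 0 < c) :
    (stN l j = 1 ∧ 1 ≤ j ∧ Sinv l (2*j-1) = c) ∨
    (stN l j ≠ 1 ∧ stN l (j+1) ≠ 1 ∧ Sinv l (2*j+1) = c) := by
  by_cases hst : stN l j = 1
  · left
    obtain ⟨k, rfl⟩ : ∃ k, j = k+1 := by
      cases j with
      | zero => rw [stN_zero] at hst; omega
      | succ k => exact ⟨k, rfl⟩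
    have hx : l (2*k+2) = l (2*k+1) + 2 := (stN_iff l k).1 hst
    rw [Sinv_even, if_pos hst, show 2*(k+1) = 2*k+2 from by ring] at hc
    refine ⟨hst, by omega, ?_⟩
    rw [show 2*(k+1)-1 = 2*k+1 from by omega, Sinv_odd, if_pos hst]
    omega
  · right
    have hst1 : stN l (j+1) ≠ 1 := by
      intro h1
      have hge := B_st_next hbip j h1
      rw [Sinv_even, if_neg hst, if_pos h1] at hc
      omega
    have hy : l (2*j+1) ≤ l (2*j) := he0 (2*j) (by omega)
    have hxy : l (2*j) = l (2*j+1) := by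
      by_contra hne
      rw [Sinv_even, if_neg hst, if_neg hst1, if_neg hne] at hc
      omega
    rw [Sinv_even, if_neg hst, if_neg hst1, if_pos hxy] at hc
    refine ⟨hst, hst1, ?_⟩
    rw [Sinv_odd, if_neg hst1, if_neg hst, if_pos hxy]
    omega

lemma Po (hbip : ∀ i, l (i+2) ≤ l i) (he0 : ∀ i, i % 2 = 0 → l (i+1) ≤ l i)
    {j : ℕ} (hc : Sinv l (2*j+1) = c) (hc2 : c % 2 = 0) (hcpos : 0 < c) :
    (stN l (j+1) = 1 ∧ Sinv l (2*j+2) = c) ∨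
    (stN l (j+1) ≠ 1 ∧ stN l j ≠ 1 ∧ Sinv l (2*j) = c) := by
  by_cases hst : stN l (j+1) = 1
  · left
    have hx : l (2*j+2) = l (2*j+1) + 2 := (stN_iff l j).1 hst
    rw [Sinv_odd, if_pos hst] at hc
    refine ⟨hst, ?_⟩
    rw [show 2*j+2 = 2*(j+1) from by ring, Sinv_even, if_pos hst,
      show 2*(j+1) = 2*j+2 from by ring]
    omega
  · right
    have hst0 : stN l j ≠ 1 := by
      intro h0
      rw [Sinv_odd, if_neg hst, if_pos h0] at hc
      omega
    have hxy : l (2*j) = l (2*j+1) := by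
      by_contra hne
      rw [Sinv_odd, if_neg hst, if_neg hst0, if_neg hne] at hc
      omega
    rw [Sinv_odd, if_neg hst, if_neg hst0, if_pos hxy] at hc
    refine ⟨hst, hst0, ?_⟩
    rw [Sinv_even, if_neg hst0, if_neg hst, if_pos hxy]
    omega

lemma B_mult (hbip : ∀ i, l (i+2) ≤ l i) (he0 : ∀ i, i % 2 = 0 → l (i+1) ≤ l i)
    (hB : ∀ m, B ≤ m → l m = 0) : EvenPartsEvenMult (Sinv l) := by
  intro c hcpos hceven
  have hc2 : c % 2 = 0 := Nat.even_iff.1 hceven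
  have hvan := B_vanish (B := B) hB
  have hset : {i | Sinv l i = c}
      = ↑((Finset.range (2*B+2)).filter (fun i => Sinv l i = c)) := by
    ext i
    simp only [Set.mem_setOf_eq, Finset.coe_filter, Finset.mem_range, Set.mem_setOf_eq]
    constructor
    · intro h
      refine ⟨?_, h⟩
      by_contra hh
      have := hvan i (by omega)
      omega
    · exact fun h => h.2
  rw [hset, Set.ncard_coe_finset]
  set F := (Finset.range (2*B+2)).filter (fun i => Sinv l i = c) with hF
  have hmem : ∀ i, i ∈ F ↔ (i < 2*B+2 ∧ Sinv l i = c) := by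
    intro i; simp [hF]
  have hmemc : ∀ i, Sinv l i = c → i ∈ F := by
    intro i h
    rw [hmem]
    refine ⟨?_, h⟩
    by_contra hh
    have := hvan i (by omega)
    omega
  -- the pairing map
  set p : ℕ → ℕ := fun i =>
    if i % 2 = 0 then (if stN l (i/2) = 1 then i-1 else i+1)
    else (if stN l (i/2+1) = 1 then i+1 else i-1) with hp
  have key : ∀ i ∈ F, i % 2 = 0 → (p i ∈ F ∧ p i % 2 = 1 ∧ p (p i) = i) := by
    intro i hi hpar
    obtain ⟨j, rfl⟩ : ∃ j, i = 2*j := ⟨i/2, by omega⟩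
    have hc : Sinv l (2*j) = c := ((hmem _).1 hi).2
    have hj2 : (2*j)/2 = j := by omega
    rcases Pe hbip he0 hc hc2 hcpos with ⟨h1, h2, h3⟩ | ⟨h1, h2, h3⟩
    · have hpi : p (2*j) = 2*j-1 := by
        simp only [hp, if_pos hpar, hj2, if_pos h1]
      obtain ⟨k, rfl⟩ : ∃ k, j = k+1 := ⟨j-1, by omega⟩
      rw [show 2*(k+1)-1 = 2*k+1 from by omega] at hpi h3
      refine ⟨?_, ?_, ?_⟩
      · rw [hpi]; exact hmemc _ h3
      · rw [hpi]; omega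
      · rw [hpi]
        simp only [hp]
        rw [if_neg (by omega : ¬ (2*k+1) % 2 = 0),
          show (2*k+1)/2+1 = k+1 from by omega, if_pos h1]
        omega
    · have hpi : p (2*j) = 2*j+1 := by
        simp only [hp, if_pos hpar, hj2, if_neg h1]
      refine ⟨?_, ?_, ?_⟩
      · rw [hpi]; exact hmemc _ h3
      · rw [hpi]; omega
      · rw [hpi]
        simp only [hp]
        rw [if_neg (by omega : ¬ (2*j+1) % 2 = 0),
          show (2*j+1)/2+1 = j+1 from by omega, if_neg h2]
        omega
  have key' : ∀ i ∈ F, i % 2 = 1 → (p i ∈ F ∧ p i % 2 = 0 ∧ p (p i) = i) := by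
    intro i hi hpar
    obtain ⟨j, rfl⟩ : ∃ j, i = 2*j+1 := ⟨i/2, by omega⟩
    have hc : Sinv l (2*j+1) = c := ((hmem _).1 hi).2
    have hj2 : (2*j+1)/2 = j := by omega
    rcases Po hbip he0 hc hc2 hcpos with ⟨h1, h3⟩ | ⟨h1, h2, h3⟩
    · have hpi : p (2*j+1) = 2*j+2 := by
        simp only [hp, if_neg (by omega : ¬ (2*j+1) % 2 = 0), hj2, if_pos h1]
      refine ⟨?_, ?_, ?_⟩
      · rw [hpi]; exact hmemc _ h3
      · rw [hpi]; omega
      · rw [hpi]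
        simp only [hp]
        rw [if_pos (by omega : (2*j+2) % 2 = 0),
          show (2*j+2)/2 = j+1 from by omega, if_pos h1]
        omega
    · have hpi : p (2*j+1) = 2*j := by
        simp only [hp, if_neg (by omega : ¬ (2*j+1) % 2 = 0), hj2, if_neg h1]
        omega
      refine ⟨?_, ?_, ?_⟩
      · rw [hpi]; exact hmemc _ h3
      · rw [hpi]; omega
      · rw [hpi]
        simp only [hp]
        rw [if_pos (by omega : (2*j) % 2 = 0),
          show (2*j)/2 = j from by omega, if_neg h2]
  have hsplit := Finset.card_filter_add_card_filter_not
    (s := F) (p := fun i => i % 2 = 0)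
  have hbijcard : (F.filter (fun i => i % 2 = 0)).card
      = (F.filter (fun i => ¬ i % 2 = 0)).card := by
    apply Finset.card_nbij' (i := p) (j := p)
    · intro a ha
      simp only [Finset.mem_coe, Finset.mem_filter] at ha ⊢
      obtain ⟨h1, h2, _⟩ := key a ha.1 ha.2
      exact ⟨h1, by omega⟩
    · intro a ha
      simp only [Finset.mem_coe, Finset.mem_filter] at ha ⊢
      obtain ⟨h1, h2, _⟩ := key' a ha.1 (by omega)
      exact ⟨h1, by omega⟩
    · intro a ha
      simp only [Finset.mem_coe, Finset.mem_filter] at ha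
      exact (key a ha.1 ha.2).2.2
    · intro a ha
      simp only [Finset.mem_coe, Finset.mem_filter] at ha
      exact (key' a ha.1 (by omega)).2.2
  refine ⟨(F.filter (fun i => i % 2 = 0)).card, by omega⟩

end


section
variable {l : ℕ → ℕ} {B N : ℕ}

lemma D_sigma (hbip : ∀ i, l (i+2) ≤ l i) (he0 : ∀ i, i % 2 = 0 → l (i+1) ≤ l i) :
    ∀ j, Ocnt (Sinv l) (2*j) % 2 = stN l j := by
  intro j
  induction j with
  | zero => rw [show 2*0 = 0 from rfl, Ocnt_zero, stN_zero]
  | succ j ih =>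
      have o1 : Ocnt (Sinv l) (2*j+1) = Ocnt (Sinv l) (2*j) + Sinv l (2*j) % 2 :=
        Ocnt_succ (Sinv l) (2*j)
      have o2 : Ocnt (Sinv l) (2*j+2) = Ocnt (Sinv l) (2*j+1) + Sinv l (2*j+1) % 2 :=
        Ocnt_succ (Sinv l) (2*j+1)
      have h1 : l (2*j+1) ≤ l (2*j) := he0 (2*j) (by omega)
      have h2 := B_st_strong hbip j
      have h3 := B_st_next hbip j
      have h4 := stN_le l j
      have h5 := stN_le l (j+1)
      have v0 := Sinv_even l j
      have v1 := Sinv_odd l j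
      rw [show 2*(j+1) = 2*j+2 from by ring]
      split_ifs at v0 v1 <;> omega

lemma D_right (hbip : ∀ i, l (i+2) ≤ l i) (he0 : ∀ i, i % 2 = 0 → l (i+1) ≤ l i)
    (he2 : ∀ i, i % 2 = 1 → l (i+1) ≤ l i + 2)
    (hB : ∀ m, B ≤ m → l m = 0) (i : ℕ) :
    T5' (Sinv l) i = l i := by
  have hdecν : ∀ k, Sinv l (k+1) ≤ Sinv l k := B_dec hbip he0 he2
  have hmultν : EvenPartsEvenMult (Sinv l) := B_mult hbip he0 hB
  rcases Nat.even_or_odd i with ⟨j, hj⟩ | ⟨j, hj⟩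
  · have hij : i = 2*j := by omega
    subst hij
    have tc := T5'_cases hdecν hmultν (2*j)
    have sσ := D_sigma hbip he0 j
    have h1 : l (2*j+1) ≤ l (2*j) := he0 (2*j) (by omega)
    have h2 := B_st_strong hbip j
    have h3 := B_st_next hbip j
    have h4 := stN_le l j
    have h5 := stN_le l (j+1)
    have v0 := Sinv_even l j
    have v1 := Sinv_odd l j
    split_ifs at v0 v1 <;> omega
  · have hij : i = 2*j+1 := by omega
    subst hij
    have tc := T5'_cases hdecν hmultν (2*j+1)
    have sσ := D_sigma hbip he0 j
    have o1 : Ocnt (Sinv l) (2*j+1) = Ocnt (Sinv l) (2*j) + Sinv l (2*j) % 2 :=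
      Ocnt_succ (Sinv l) (2*j)
    have h1 : l (2*j+1) ≤ l (2*j) := he0 (2*j) (by omega)
    have h2 := B_st_strong hbip j
    have h3 := B_st_next hbip j
    have h4 := stN_le l j
    have h5 := stN_le l (j+1)
    have v0 := Sinv_even l j
    have v1 := Sinv_odd l j
    split_ifs at v0 v1 <;> omega

end


/-- 3.6(b): for even N, the substitution is a bijection from 'Z¹_N onto BP^{N/2}_{0,2}. -/
theorem Z1'_bij_BP02 (N : ℕ) (hN : Even N) :
    Set.BijOn T5
      {ν | IsPartitionSeq ν ∧ SumsTo ν N ∧ EvenPartsEvenMult ν}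
      {l | IsBipartition l ∧ SumsTo l (N / 2) ∧ HasExcess 0 2 l} := by
  apply Set.InvOn.bijOn (f' := Sinv)
  · constructor
    · -- left inverse on the domain
      intro ν hν
      obtain ⟨⟨_, hdec⟩, ⟨B, hB, hsum⟩, hmult⟩ := hν
      have hT : T5 ν = T5' ν := funext (T5_eq_T5' hdec hmult)
      rw [hT]
      funext i
      exact C_left hdec hmult hB hsum hN i
    · -- right inverse on the codomain
      intro l hl
      obtain ⟨⟨_, hbip⟩, ⟨B, hB, hsum⟩, hexc⟩ := hl
      have he0 : ∀ i, i % 2 = 0 → l (i+1) ≤ l i := by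
        intro i h
        have := (hexc i).1 (Nat.even_iff.2 h)
        omega
      have he2 : ∀ i, i % 2 = 1 → l (i+1) ≤ l i + 2 := by
        intro i h
        exact (hexc i).2 (Nat.odd_iff.2 h)
      have hdecν : ∀ k, Sinv l (k+1) ≤ Sinv l k := B_dec hbip he0 he2
      have hmultν : EvenPartsEvenMult (Sinv l) := B_mult hbip he0 hB
      have hT : T5 (Sinv l) = T5' (Sinv l) := funext (T5_eq_T5' hdecν hmultν)
      rw [hT]
      funext i
      exact D_right hbip he0 he2 hB i
  · -- maps the domain into the codomain
    intro ν hν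
    obtain ⟨⟨_, hdec⟩, ⟨B, hB, hsum⟩, hmult⟩ := hν
    have hT : T5 ν = T5' ν := funext (T5_eq_T5' hdec hmult)
    simp only [Set.mem_setOf_eq]
    rw [hT]
    exact A_mapsTo hdec hmult hB hsum hN
  · -- maps the codomain into the domain
    intro l hl
    obtain ⟨⟨_, hbip⟩, ⟨B, hB, hsum⟩, hexc⟩ := hl
    have he0 : ∀ i, i % 2 = 0 → l (i+1) ≤ l i := by
      intro i h
      have := (hexc i).1 (Nat.even_iff.2 h)
      omega
    have he2 : ∀ i, i % 2 = 1 → l (i+1) ≤ l i + 2 := by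
      intro i h
      exact (hexc i).2 (Nat.odd_iff.2 h)
    simp only [Set.mem_setOf_eq]
    exact ⟨⟨⟨2*B+2, B_vanish hB⟩, B_dec hbip he0 he2⟩,
      ⟨2*(B+1), fun m hm => B_vanish hB m (by omega), B_sum hbip he0 hB hsum hN⟩,
      B_mult hbip he0 hB⟩
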